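/- Every graded weakly prime ideal of a G-graded ring R is a graded weakly 2-absorbing ideal of R. -/

import Mathlib

variable {G R : Type*} [AddGroup G] [DecidableEq G] [Ring R]

/-- `x` is a homogeneous element of the `G`-graded ring `R`. -/
def IsHomog (𝒜 : G → AddSubgroup R) (x : R) : Prop := ∃ g, x ∈ 𝒜 g

/-- A two-sided ideal is graded if it contains all homogeneous components of its elements. -/
def IsGradedIdeal (𝒜 : G → AddSubgroup R) [GradedRing 𝒜] (P : TwoSidedIdeal R) : Prop :=
  ∀ a ∈ P, ∀ g : G, (DirectSum.decompose 𝒜 a g : R) ∈ P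

/-- Graded weakly prime: a proper graded ideal `P` such that `0 ≠ IJ ⊆ P` for graded
ideals `I, J` implies `I ⊆ P` or `J ⊆ P`. -/
def IsGradedWeaklyPrime (𝒜 : G → AddSubgroup R) [GradedRing 𝒜] (P : TwoSidedIdeal R) : Prop :=
  P ≠ ⊤ ∧ IsGradedIdeal 𝒜 P ∧
    ∀ I J : TwoSidedIdeal R, IsGradedIdeal 𝒜 I → IsGradedIdeal 𝒜 J →
      (∃ a ∈ I, ∃ b ∈ J, a * b ≠ 0) → (∀ a ∈ I, ∀ b ∈ J, a * b ∈ P) →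
      I ≤ P ∨ J ≤ P

/-- Graded weakly 2-absorbing: a proper graded ideal `P` such that for homogeneous `x, y, z`,
`0 ≠ xRyRz ⊆ P` implies `xy ∈ P` or `yz ∈ P` or `xz ∈ P`. -/
def IsGradedWeakly2Absorbing (𝒜 : G → AddSubgroup R) [GradedRing 𝒜] (P : TwoSidedIdeal R) : Prop :=
  P ≠ ⊤ ∧ IsGradedIdeal 𝒜 P ∧
    ∀ x y z : R, IsHomog 𝒜 x → IsHomog 𝒜 y → IsHomog 𝒜 z →
      (∃ r s : R, x * r * y * s * z ≠ 0) → (∀ r s : R, x * r * y * s * z ∈ P) →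
      x * y ∈ P ∨ y * z ∈ P ∨ x * z ∈ P

/-- The set of elements of the form `a * x * r * z * b`. -/
def sandwichSet (x z : R) : Set R := {t | ∃ a r b : R, t = a * x * r * z * b}

lemma sandwichSet_mul_left (x z c t : R) (ht : t ∈ AddSubgroup.closure (sandwichSet x z)) :
    c * t ∈ AddSubgroup.closure (sandwichSet x z) := by
  induction ht using AddSubgroup.closure_induction with
  | mem u hu =>
      obtain ⟨a, r, b, rfl⟩ := hu
      exact AddSubgroup.subset_closure ⟨c * a, r, b, by simp [mul_assoc]⟩
  | zero => simpa using (AddSubgroup.closure (sandwichSet x z)).zero_mem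
  | add u v _ _ hu hv =>
      rw [mul_add]; exact (AddSubgroup.closure _).add_mem hu hv
  | neg u _ hu =>
      rw [mul_neg]; exact (AddSubgroup.closure _).neg_mem hu

lemma sandwichSet_mul_right (x z c t : R) (ht : t ∈ AddSubgroup.closure (sandwichSet x z)) :
    t * c ∈ AddSubgroup.closure (sandwichSet x z) := by
  induction ht using AddSubgroup.closure_induction with
  | mem u hu =>
      obtain ⟨a, r, b, rfl⟩ := hu
      exact AddSubgroup.subset_closure ⟨a, r, b * c, by simp [mul_assoc]⟩
  | zero => simpa using (AddSubgroup.closure (sandwichSet x z)).zero_mem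
  | add u v _ _ hu hv =>
      rw [add_mul]; exact (AddSubgroup.closure _).add_mem hu hv
  | neg u _ hu =>
      rw [neg_mul]; exact (AddSubgroup.closure _).neg_mem hu

/-- The two-sided ideal generated by `x R z` (elements `a x r z b`). -/
def sandwichIdeal (x z : R) : TwoSidedIdeal R :=
  TwoSidedIdeal.mk' (AddSubgroup.closure (sandwichSet x z))
    ((AddSubgroup.closure _).zero_mem)
    (fun h1 h2 => (AddSubgroup.closure _).add_mem h1 h2)
    (fun h => (AddSubgroup.closure _).neg_mem h)
    (fun h => sandwichSet_mul_left _ _ _ _ h)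
    (fun h => sandwichSet_mul_right _ _ _ _ h)

lemma mem_sandwichIdeal_gen (x z a r b : R) : a * x * r * z * b ∈ sandwichIdeal x z := by
  rw [sandwichIdeal, TwoSidedIdeal.mem_mk']
  exact AddSubgroup.subset_closure ⟨a, r, b, rfl⟩

section Graded

variable (𝒜 : G → AddSubgroup R) [GradedRing 𝒜]

lemma decompose_sandwich_mem (T : AddSubgroup R) {x z : R} {dx dz : G}
    (hx : x ∈ 𝒜 dx) (hz : z ∈ 𝒜 dz)
    (hT : ∀ a r b : R, a * x * r * z * b ∈ T) :
    ∀ a r b : R, ∀ g : G, (DirectSum.decompose 𝒜 (a * x * r * z * b) g : R) ∈ T := by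
  intro a
  induction a using DirectSum.Decomposition.inductionOn 𝒜 with
  | zero =>   intro r b g; simp only [zero_mul, DirectSum.decompose_zero]
              simpa using T.zero_mem
  | add m m' hm hm' =>
      intro r b g
      have : (m + m') * x * r * z * b = m * x * r * z * b + m' * x * r * z * b := by
        simp [add_mul]
      rw [this, DirectSum.decompose_add]
      simpa using T.add_mem (hm r b g) (hm' r b g)
  | homogeneous ma =>
      rename_i da
      obtain ⟨a, ha⟩ := ma
      intro r
      induction r using DirectSum.Decomposition.inductionOn 𝒜 with
      | zero =>   intro b g
                  simp only [mul_zero, zero_mul, DirectSum.decompose_zero]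
                  simpa using T.zero_mem
      | add m m' hm hm' =>
          intro b g
          have : a * x * (m + m') * z * b = a * x * m * z * b + a * x * m' * z * b := by
            simp [mul_add, add_mul]
          rw [this, DirectSum.decompose_add]
          simpa using T.add_mem (hm b g) (hm' b g)
      | homogeneous mr =>
          rename_i dr
          obtain ⟨r, hr⟩ := mr
          intro b
          induction b using DirectSum.Decomposition.inductionOn 𝒜 with
          | zero =>   intro g
                      simp only [mul_zero, DirectSum.decompose_zero]
                      simpa using T.zero_mem
          | add m m' hm hm' =>
              intro g
              rw [mul_add, DirectSum.decompose_add]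
              simpa using T.add_mem (hm g) (hm' g)
          | homogeneous mb =>
              rename_i db
              obtain ⟨b, hb⟩ := mb
              intro g
              have hmem : a * x * r * z * b ∈ 𝒜 (da + dx + dr + dz + db) :=
                SetLike.mul_mem_graded (SetLike.mul_mem_graded (SetLike.mul_mem_graded
                  (SetLike.mul_mem_graded ha hx) hr) hz) hb
              by_cases hg : da + dx + dr + dz + db = g
              · rw [← hg, DirectSum.decompose_of_mem_same 𝒜 hmem]; exact hT _ _ _
              · rw [DirectSum.decompose_of_mem_ne 𝒜 hmem hg]; exact T.zero_mem

lemma sandwichIdeal_graded {x z : R} {dx dz : G} (hx : x ∈ 𝒜 dx) (hz : z ∈ 𝒜 dz) :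
    IsGradedIdeal 𝒜 (sandwichIdeal x z) := by
  intro a ha g
  rw [sandwichIdeal, TwoSidedIdeal.mem_mk'] at ha ⊢
  induction ha using AddSubgroup.closure_induction with
  | mem u hu =>
      obtain ⟨a', r, b, rfl⟩ := hu
      exact decompose_sandwich_mem 𝒜 (AddSubgroup.closure (sandwichSet x z)) hx hz
        (fun a r b => AddSubgroup.subset_closure ⟨a, r, b, rfl⟩) a' r b g
  | zero => simpa using (AddSubgroup.closure (sandwichSet x z)).zero_mem
  | add u v _ _ hu hv =>
      rw [DirectSum.decompose_add]
      exact (AddSubgroup.closure _).add_mem hu hv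
  | neg u _ hu =>
      rw [DirectSum.decompose_neg]
      exact (AddSubgroup.closure _).neg_mem hu

end Graded

/-- Every graded weakly prime ideal is graded weakly 2-absorbing. -/
theorem stmt2 (𝒜 : G → AddSubgroup R) [GradedRing 𝒜] (P : TwoSidedIdeal R)
    (hP : IsGradedWeaklyPrime 𝒜 P) : IsGradedWeakly2Absorbing 𝒜 P := by
  obtain ⟨hne, hPg, hprime⟩ := hP
  refine ⟨hne, hPg, ?_⟩
  rintro x y z ⟨dx, hx⟩ ⟨dy, hy⟩ ⟨dz, hz⟩ ⟨r0, s0, hns⟩ h5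
  set I := sandwichIdeal x (1 : R) with hI
  set J := sandwichIdeal y z with hJ
  have hIg : IsGradedIdeal 𝒜 I := sandwichIdeal_graded 𝒜 hx (SetLike.one_mem_graded 𝒜)
  have hJg : IsGradedIdeal 𝒜 J := sandwichIdeal_graded 𝒜 hy hz
  -- the product of elements of I and J lies in P
  have hprod : ∀ a ∈ I, ∀ b ∈ J, a * b ∈ P := by
    intro a ha b hb
    rw [hI, sandwichIdeal, TwoSidedIdeal.mem_mk'] at ha
    rw [hJ, sandwichIdeal, TwoSidedIdeal.mem_mk'] at hb
    induction ha using AddSubgroup.closure_induction with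
    | mem u hu =>
        obtain ⟨a1, r1, b1, rfl⟩ := hu
        induction hb using AddSubgroup.closure_induction with
        | mem v hv =>
            obtain ⟨a2, r2, b2, rfl⟩ := hv
            have key : a1 * x * r1 * 1 * b1 * (a2 * y * r2 * z * b2)
                = a1 * (x * (r1 * (b1 * a2)) * y * r2 * z) * b2 := by
              simp [mul_assoc]
            rw [key]
            exact P.mul_mem_right _ _ (P.mul_mem_left _ _ (h5 _ _))
        | zero => simp
        | add u v _ _ hu hv =>
            rw [mul_add]; exact P.add_mem hu hv
        | neg u _ hu =>
            rw [mul_neg]; exact P.neg_mem hu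
    | zero => simp
    | add u v _ _ hu hv =>
        rw [add_mul]; exact P.add_mem hu hv
    | neg u _ hu =>
        rw [neg_mul]; exact P.neg_mem hu
  have hnz : ∃ a ∈ I, ∃ b ∈ J, a * b ≠ 0 := by
    refine ⟨x * r0, ?_, y * s0 * z, ?_, ?_⟩
    · have := mem_sandwichIdeal_gen x (1 : R) 1 r0 1
      simpa [hI] using this
    · have := mem_sandwichIdeal_gen y z 1 s0 1
      simpa [hJ] using this
    · intro h; apply hns
      rw [show x * r0 * y * s0 * z = x * r0 * (y * s0 * z) by simp [mul_assoc]]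
      exact h
  rcases hprime I J hIg hJg hnz hprod with h | h
  · left
    have hxI : x ∈ I := by
      have := mem_sandwichIdeal_gen x (1 : R) 1 1 1
      simpa [hI] using this
    exact P.mul_mem_right _ _ (h hxI)
  · right; left
    have hyzJ : y * z ∈ J := by
      have := mem_sandwichIdeal_gen y z 1 1 1
      simpa [hJ] using this
    exact h hyzJ
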